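/- Let E ⊂ ℝ^{n+1} be closed n-dimensional ADR with Christ–David grid 𝔻(E), and suppose the cubes Q ∈ 𝒢₀ ⊂ 𝔻(E) each admit a hyperplane H_Q with sup_{x∈Δ_Q*} dist(x,H_Q) + sup_{y∈H_Q∩B_Q*} dist(y,E) < η₁ ℓ(Q), while the family S satisfies the unilateral graph approximation sup_{x∈Δ_Q*} dist(x, Γ_S) < η₁ ℓ(Q) for a Lipschitz graph Γ_S with constant ≤ η₁. Then for any Q ∈ S ∩ 𝒢₀ and η₁ ≪ K₁^{-1}, one has the bilateral bound sup_{y ∈ (1/2)B_Q* ∩ Γ_S} dist(y, E) < C K₁ η₁ ℓ(Q), where B_Q* = B(x_Q, K₁ ℓ(Q)), Δ_Q* = B_Q* ∩ E, and C is a dimensional constant. -/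

import Mathlib

open MeasureTheory Metric Set
open scoped ENNReal
noncomputable section

abbrev Euc (n : ℕ) := EuclideanSpace ℝ (Fin (n + 1))

/-- The Lipschitz graph determined by an orthonormal basis `v` of `ℝ^{n+1}` and a function
`φ`: points `Σ_j z_j v_j + φ(z) v_{last}`. -/
def LipGraph {n : ℕ} (v : Fin (n + 1) → Euc n)
    (φ : EuclideanSpace ℝ (Fin n) → ℝ) : Set (Euc n) :=
  {y | ∃ z : EuclideanSpace ℝ (Fin n),
    y = (∑ j : Fin n, z j • v j.castSucc) + φ z • v (Fin.last n)}

/-- The affine hyperplane through `p` with unit normal `ν`. -/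
def Hyperplane {n : ℕ} (p ν : Euc n) : Set (Euc n) :=
  {y | (inner ℝ (y - p) ν : ℝ) = 0}

lemma graph_repr {n : ℕ} {v : Fin (n + 1) → Euc n} {φ : EuclideanSpace ℝ (Fin n) → ℝ}
    (z w : EuclideanSpace ℝ (Fin n)) :
    ((∑ j : Fin n, z j • v j.castSucc) + φ z • v (Fin.last n)) -
      ((∑ j : Fin n, w j • v j.castSucc) + φ w • v (Fin.last n)) =
    ∑ i : Fin (n+1), (Fin.snoc (fun j => z j - w j) (φ z - φ w) : Fin (n+1) → ℝ) i • v i := by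
  rw [Fin.sum_univ_castSucc]
  simp [Fin.snoc_castSucc, Fin.snoc_last, sub_smul, Finset.sum_sub_distrib]
  abel

lemma graphG {n : ℕ} {v : Fin (n + 1) → Euc n} {φ : EuclideanSpace ℝ (Fin n) → ℝ}
    {η : ℝ} (hη : 0 ≤ η) (hv : Orthonormal ℝ v)
    (hφ : LipschitzWith (Real.toNNReal η) φ)
    {a b : Euc n} (ha : a ∈ LipGraph v φ) (hb : b ∈ LipGraph v φ) :
    |(inner ℝ (a - b) (v (Fin.last n)) : ℝ)| ≤ η * ‖a - b‖ := by
  obtain ⟨z, rfl⟩ := ha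
  obtain ⟨w, rfl⟩ := hb
  rw [graph_repr]
  set c : Fin (n+1) → ℝ := Fin.snoc (fun j => z j - w j) (φ z - φ w) with hc
  have h1 : (inner ℝ (∑ i : Fin (n+1), c i • v i) (v (Fin.last n)) : ℝ) = φ z - φ w := by
    rw [hv.inner_left_fintype]
    simp [hc]
  have hnorm2 : ‖∑ i : Fin (n+1), c i • v i‖ ^ 2 = ∑ i : Fin (n+1), (c i) ^ 2 := by
    rw [← real_inner_self_eq_norm_sq, hv.inner_sum]
    simp [sq]
  have h2 : ‖z - w‖ ≤ ‖∑ i : Fin (n+1), c i • v i‖ := by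
    refine le_of_pow_le_pow_left₀ two_ne_zero (norm_nonneg _) ?_
    rw [hnorm2, Fin.sum_univ_castSucc]
    have : ‖z - w‖ ^ 2 = ∑ j : Fin n, (z j - w j) ^ 2 := by
      rw [EuclideanSpace.norm_eq, Real.sq_sqrt (by positivity)]
      congr 1
      ext j
      simp [sq_abs]
    rw [this]
    have : ∀ j : Fin n, c j.castSucc = z j - w j := by intro j; simp [hc]
    simp only [this]
    nlinarith [sq_nonneg (c (Fin.last n))]
  have h3 : |φ z - φ w| ≤ η * ‖z - w‖ := by
    have := hφ.dist_le_mul z w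
    rwa [Real.dist_eq, Real.coe_toNNReal η hη, dist_eq_norm] at this
  rw [h1]
  calc |φ z - φ w| ≤ η * ‖z - w‖ := h3
    _ ≤ η * ‖∑ i : Fin (n+1), c i • v i‖ := mul_le_mul_of_nonneg_left h2 hη

set_option maxHeartbeats 1000000 in
/-- Key bilateral claim: if every point of `E ∩ B(x_Q, K₁ℓ)` is `η₁ℓ`-close to a hyperplane
`H_Q`, every point of `H_Q ∩ B(x_Q, K₁ℓ)` is `η₁ℓ`-close to `E`, and every point of
`E ∩ B(x_Q, K₁ℓ)` is `η₁ℓ`-close to a Lipschitz graph `Γ_S` with constant `≤ η₁`, then for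
`η₁ ≪ K₁⁻¹` every point of `Γ_S ∩ (1/2)B(x_Q,K₁ℓ)` is `C K₁ η₁ ℓ`-close to `E`, with `C`
dimensional. -/
theorem statement19 (n : ℕ) :
    ∃ C : ℝ, 0 < C ∧ ∃ ε₀ : ℝ, 0 < ε₀ ∧
      ∀ (E : Set (Euc n)) (xQ : Euc n) (ℓ K₁ η₁ : ℝ)
        (v : Fin (n + 1) → Euc n) (φ : EuclideanSpace ℝ (Fin n) → ℝ) (p ν : Euc n),
        IsClosed E → xQ ∈ E → 0 < ℓ → 1 ≤ K₁ → 0 < η₁ → η₁ * K₁ ≤ ε₀ →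
        Orthonormal ℝ v → LipschitzWith (Real.toNNReal η₁) φ → ‖ν‖ = 1 →
        (∀ x ∈ E ∩ Metric.ball xQ (K₁ * ℓ),
          Metric.infDist x (Hyperplane p ν) < η₁ * ℓ) →
        (∀ y ∈ Hyperplane p ν ∩ Metric.ball xQ (K₁ * ℓ),
          Metric.infDist y E < η₁ * ℓ) →
        (∀ x ∈ E ∩ Metric.ball xQ (K₁ * ℓ),
          Metric.infDist x (LipGraph v φ) < η₁ * ℓ) →
        ∀ y ∈ LipGraph v φ ∩ Metric.ball xQ (K₁ * ℓ / 2),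
          Metric.infDist y E < C * K₁ * η₁ * ℓ := by
  refine ⟨21, by norm_num, 1/80, by norm_num, ?_⟩
  intro E xQ ℓ K η v φ p ν hE hxQ hℓ hK hη hηK hv hφ hν hEH hHE hEΓ y hy
  set vL := v (Fin.last n) with hvL
  have hvL1 : ‖vL‖ = 1 := hv.1 (Fin.last n)
  have hη80 : η ≤ 1/80 := by nlinarith
  have hKl : (0:ℝ) < K * ℓ := by nlinarith
  have hηl : (0:ℝ) < η * ℓ := by nlinarith
  have hηlK : η * ℓ ≤ K * ℓ / 80 := by nlinarith
  have hHne : (Hyperplane p ν).Nonempty := ⟨p, by simp [Hyperplane]⟩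
  have hΓne : (LipGraph v φ).Nonempty := ⟨_, 0, rfl⟩
  have hEne : E.Nonempty := ⟨xQ, hxQ⟩
  obtain ⟨q, hqH, hq⟩ := (infDist_lt_iff hHne).mp (hEH xQ ⟨hxQ, mem_ball_self hKl⟩)
  have hq0 : (inner ℝ (q - p) ν : ℝ) = 0 := hqH
  -- Step B: points of the hyperplane well inside the ball are 2ηℓ-close to the graph
  have hB : ∀ h ∈ Hyperplane p ν, dist h xQ ≤ 3/4*(K*ℓ) →
      ∃ γ ∈ LipGraph v φ, dist h γ < 2*(η*ℓ) := by
    intro h hh hdist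
    have hball : h ∈ ball xQ (K*ℓ) := by rw [mem_ball]; nlinarith
    obtain ⟨e, heE, he⟩ := (infDist_lt_iff hEne).mp (hHE h ⟨hh, hball⟩)
    have heball : e ∈ ball xQ (K*ℓ) := by
      rw [mem_ball]
      have h1 := dist_triangle e h xQ
      rw [dist_comm e h] at h1
      nlinarith
    obtain ⟨γ, hγΓ, hγ⟩ := (infDist_lt_iff hΓne).mp (hEΓ e ⟨heE, heball⟩)
    exact ⟨γ, hγΓ, by have := dist_triangle h e γ; nlinarith⟩
  obtain ⟨γ₀, hγ₀Γ, hγ₀⟩ := hB q hqH (by rw [dist_comm]; nlinarith)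
  -- Step C: directions inside the hyperplane are nearly orthogonal to vL
  have hC : ∀ u : Euc n, ‖u‖ = 1 → (inner ℝ u ν : ℝ) = 0 →
      |(inner ℝ u vL : ℝ)| ≤ 17 * η := by
    intro u hu hu0
    set h₁ := q + (K*ℓ/2) • u with hh₁
    have hh₁H : h₁ ∈ Hyperplane p ν := by
      show (inner ℝ (h₁ - p) ν : ℝ) = 0
      have : h₁ - p = (q - p) + (K*ℓ/2) • u := by rw [hh₁]; abel
      rw [this, inner_add_left, real_inner_smul_left, hq0, hu0]; ring
    have hdq : dist h₁ q = K*ℓ/2 := by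
      rw [hh₁, dist_eq_norm, add_sub_cancel_left, norm_smul, hu, mul_one,
        Real.norm_eq_abs, abs_of_pos (by nlinarith : (0:ℝ) < K*ℓ/2)]
    obtain ⟨γ₁, hγ₁Γ, hγ₁⟩ := hB h₁ hh₁H (by
      have := dist_triangle h₁ q xQ
      rw [dist_comm q xQ] at this
      nlinarith)
    have hkey : (inner ℝ (h₁ - q) vL : ℝ) = (K*ℓ/2) * (inner ℝ u vL : ℝ) := by
      rw [hh₁, add_sub_cancel_left, real_inner_smul_left]
    have hsplit : (inner ℝ (h₁ - q) vL : ℝ) =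
        (inner ℝ (γ₁ - γ₀) vL : ℝ) + (inner ℝ ((h₁ - q) - (γ₁ - γ₀)) vL : ℝ) := by
      rw [← inner_add_left]; congr 1; abel
    have hb1 : |(inner ℝ (γ₁ - γ₀) vL : ℝ)| ≤ η * ‖γ₁ - γ₀‖ :=
      graphG hη.le hv hφ hγ₁Γ hγ₀Γ
    have hb2 : |(inner ℝ ((h₁ - q) - (γ₁ - γ₀)) vL : ℝ)| ≤ dist h₁ γ₁ + dist q γ₀ := by
      calc |(inner ℝ ((h₁ - q) - (γ₁ - γ₀)) vL : ℝ)| ≤ ‖(h₁ - q) - (γ₁ - γ₀)‖ * ‖vL‖ :=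
            abs_real_inner_le_norm _ _
        _ = ‖(h₁ - γ₁) - (q - γ₀)‖ := by rw [hvL1, mul_one]; congr 1; abel
        _ ≤ ‖h₁ - γ₁‖ + ‖q - γ₀‖ := norm_sub_le _ _
        _ = dist h₁ γ₁ + dist q γ₀ := by rw [dist_eq_norm, dist_eq_norm]
    have hγnorm : ‖γ₁ - γ₀‖ ≤ K*ℓ/2 + 4*(η*ℓ) := by
      calc ‖γ₁ - γ₀‖ = dist γ₁ γ₀ := (dist_eq_norm _ _).symm
        _ ≤ dist γ₁ h₁ + dist h₁ q + dist q γ₀ := dist_triangle4 _ _ _ _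
        _ ≤ 2*(η*ℓ) + K*ℓ/2 + 2*(η*ℓ) := by
            rw [dist_comm γ₁ h₁]
            have := hγ₁.le; have := hγ₀.le; rw [hdq]; linarith
        _ = K*ℓ/2 + 4*(η*ℓ) := by ring
    have hmain : (K*ℓ/2) * |(inner ℝ u vL : ℝ)| ≤ (K*ℓ/2) * (17 * η) := by
      have habs : (K*ℓ/2) * |(inner ℝ u vL : ℝ)| = |(inner ℝ (h₁ - q) vL : ℝ)| := by
        rw [hkey, abs_mul, abs_of_pos (by nlinarith : (0:ℝ) < K*ℓ/2)]
      rw [habs, hsplit]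
      calc |(inner ℝ (γ₁ - γ₀) vL : ℝ) + (inner ℝ ((h₁ - q) - (γ₁ - γ₀)) vL : ℝ)|
          ≤ |(inner ℝ (γ₁ - γ₀) vL : ℝ)| + |(inner ℝ ((h₁ - q) - (γ₁ - γ₀)) vL : ℝ)| := abs_add_le _ _
        _ ≤ η * (K*ℓ/2 + 4*(η*ℓ)) + (2*(η*ℓ) + 2*(η*ℓ)) := by
            have h5 := mul_le_mul_of_nonneg_left hγnorm hη.le
            linarith [hb1, hb2, hγ₁.le, hγ₀.le]
        _ ≤ (K*ℓ/2) * (17 * η) := by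
            have e1 : η*η*ℓ ≤ η*ℓ := by nlinarith
            have e2 : η*ℓ ≤ η*(K*ℓ) := by nlinarith
            nlinarith [e1, e2]
    exact le_of_mul_le_mul_left hmain (by nlinarith : (0:ℝ) < K*ℓ/2)
  -- Step D: ν is nearly parallel to vL
  set c : ℝ := inner ℝ ν vL with hc
  set w : Euc n := ν - c • vL with hw
  have hνw : ν = c • vL + w := by rw [hw]; abel
  have hcabs : |c| ≤ 1 := by
    have := abs_real_inner_le_norm ν vL
    rwa [hν, hvL1, one_mul] at this
  have hcc : (inner ℝ vL ν : ℝ) = c := by rw [hc]; exact real_inner_comm ν vL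
  have hwsq : ‖w‖^2 = 1 - c^2 := by
    rw [← real_inner_self_eq_norm_sq, hw]
    simp only [inner_sub_left, inner_sub_right, real_inner_smul_left, real_inner_smul_right]
    rw [real_inner_self_eq_norm_sq, real_inner_self_eq_norm_sq, hν, hvL1]
    simp only [hcc, ← hc]
    ring
  set u' : Euc n := vL - c • ν with hu'
  have hu'sq : ‖u'‖^2 = 1 - c^2 := by
    rw [← real_inner_self_eq_norm_sq, hu']
    simp only [inner_sub_left, inner_sub_right, real_inner_smul_left, real_inner_smul_right]
    rw [real_inner_self_eq_norm_sq, real_inner_self_eq_norm_sq, hν, hvL1]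
    simp only [hcc, ← hc]
    ring
  have hu'le : ‖u'‖ ≤ 17 * η := by
    by_cases h0 : u' = 0
    · rw [h0, norm_zero]; nlinarith
    · have hn : (0:ℝ) < ‖u'‖ := norm_pos_iff.mpr h0
      have h1 : ‖(‖u'‖⁻¹ • u')‖ = 1 := by
        rw [norm_smul, norm_inv, norm_norm, inv_mul_cancel₀ hn.ne']
      have h2 : (inner ℝ (‖u'‖⁻¹ • u') ν : ℝ) = 0 := by
        rw [real_inner_smul_left, hu', inner_sub_left, real_inner_smul_left,
          real_inner_self_eq_norm_sq, hν]
        simp only [hcc, ← hc]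
        ring
      have e : (inner ℝ u' vL : ℝ) = ‖u'‖^2 := by
        rw [hu', inner_sub_left, real_inner_smul_left, real_inner_self_eq_norm_sq, hvL1, hu'sq]
        simp only [hcc, ← hc]
        ring
      have h3 : (inner ℝ (‖u'‖⁻¹ • u') vL : ℝ) = ‖u'‖ := by
        rw [real_inner_smul_left, e, sq, ← mul_assoc, inv_mul_cancel₀ hn.ne', one_mul]
      have := hC _ h1 h2
      rw [h3, abs_of_nonneg hn.le] at this
      exact this
  have hwle : ‖w‖ ≤ 17 * η := by
    refine le_of_pow_le_pow_left₀ two_ne_zero (by nlinarith) ?_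
    rw [hwsq, ← hu'sq]
    nlinarith [norm_nonneg u', hu'le]
  -- Final step
  obtain ⟨hyΓ, hyB⟩ := hy
  rw [mem_ball] at hyB
  set s : ℝ := inner ℝ (y - p) ν with hs
  have hynorm : ‖y - γ₀‖ ≤ K*ℓ := by
    calc ‖y - γ₀‖ = dist y γ₀ := (dist_eq_norm _ _).symm
      _ ≤ dist y xQ + dist xQ q + dist q γ₀ := dist_triangle4 _ _ _ _
      _ ≤ K*ℓ := by nlinarith
  have hbd1 : |(inner ℝ (y - γ₀) ν : ℝ)| ≤ 18 * η * ‖y - γ₀‖ := by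
    have hexp : (inner ℝ (y - γ₀) ν : ℝ) =
        c * (inner ℝ (y - γ₀) vL : ℝ) + (inner ℝ (y - γ₀) w : ℝ) := by
      conv_lhs => rw [hνw]
      rw [inner_add_right, real_inner_smul_right]
    rw [hexp]
    have hA : |c * (inner ℝ (y - γ₀) vL : ℝ)| ≤ η * ‖y - γ₀‖ := by
      rw [abs_mul]
      have := graphG hη.le hv hφ hyΓ hγ₀Γ
      calc |c| * |(inner ℝ (y - γ₀) vL : ℝ)| ≤ 1 * (η * ‖y - γ₀‖) := by
            apply mul_le_mul hcabs this (abs_nonneg _) one_pos.le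
        _ = η * ‖y - γ₀‖ := one_mul _
    have hBb : |(inner ℝ (y - γ₀) w : ℝ)| ≤ 17 * η * ‖y - γ₀‖ := by
      calc |(inner ℝ (y - γ₀) w : ℝ)| ≤ ‖y - γ₀‖ * ‖w‖ := abs_real_inner_le_norm _ _
        _ ≤ ‖y - γ₀‖ * (17 * η) := mul_le_mul_of_nonneg_left hwle (norm_nonneg _)
        _ = 17 * η * ‖y - γ₀‖ := by ring
    calc |c * (inner ℝ (y - γ₀) vL : ℝ) + (inner ℝ (y - γ₀) w : ℝ)|
        ≤ |c * (inner ℝ (y - γ₀) vL : ℝ)| + |(inner ℝ (y - γ₀) w : ℝ)| := abs_add_le _ _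
      _ ≤ 18 * η * ‖y - γ₀‖ := by linarith
  have hbd2 : |(inner ℝ (γ₀ - q) ν : ℝ)| ≤ 2*(η*ℓ) := by
    calc |(inner ℝ (γ₀ - q) ν : ℝ)| ≤ ‖γ₀ - q‖ * ‖ν‖ := abs_real_inner_le_norm _ _
      _ = dist q γ₀ := by rw [hν, mul_one, ← dist_eq_norm, dist_comm]
      _ ≤ 2*(η*ℓ) := hγ₀.le
  have hsbound : |s| ≤ 20 * η * (K*ℓ) := by
    have hsplit : s = (inner ℝ (y - γ₀) ν : ℝ) + (inner ℝ (γ₀ - q) ν : ℝ) +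
        (inner ℝ (q - p) ν : ℝ) := by
      rw [hs, ← inner_add_left, ← inner_add_left]; congr 1; abel
    rw [hsplit, hq0, add_zero]
    calc |(inner ℝ (y - γ₀) ν : ℝ) + (inner ℝ (γ₀ - q) ν : ℝ)|
        ≤ |(inner ℝ (y - γ₀) ν : ℝ)| + |(inner ℝ (γ₀ - q) ν : ℝ)| := abs_add_le _ _
      _ ≤ 18 * η * (K*ℓ) + 2*(η*ℓ) := by
          have := mul_le_mul_of_nonneg_left hynorm (by positivity : (0:ℝ) ≤ 18*η)
          linarith [hbd1, hbd2]
      _ ≤ 20 * η * (K*ℓ) := by nlinarith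
  set h : Euc n := y - s • ν with hh
  have hhH : h ∈ Hyperplane p ν := by
    show (inner ℝ (h - p) ν : ℝ) = 0
    have : h - p = (y - p) - s • ν := by rw [hh]; abel
    rw [this, inner_sub_left, real_inner_smul_left, real_inner_self_eq_norm_sq, hν, ← hs]
    ring
  have hdyh : dist y h = |s| := by
    rw [hh, dist_eq_norm]
    have : y - (y - s • ν) = s • ν := by abel
    rw [this, norm_smul, hν, mul_one, Real.norm_eq_abs]
  have hhball : h ∈ ball xQ (K*ℓ) := by
    rw [mem_ball]
    have h1 := dist_triangle h y xQ
    rw [dist_comm h y] at h1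
    nlinarith [hsbound, hdyh]
  obtain ⟨e, heE, he⟩ := (infDist_lt_iff hEne).mp (hHE h ⟨hhH, hhball⟩)
  have hfinal : dist y e < 21 * K * η * ℓ := by
    have h1 := dist_triangle y h e
    nlinarith [hsbound, hdyh]
  calc Metric.infDist y E ≤ dist y e := infDist_le_dist_of_mem heE
    _ < 21 * K * η * ℓ := hfinal
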